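/- Let z ≥ 0 be a real number and N ≥ 1 a natural number with N ≥ 8·e·max{2, z} (e being Euler's number). Then e^{−z} · Σ_{n=0}^{N} z^n/n! ≥ 1 − 4^{−N}. -/

import Mathlib

open scoped Nat

private lemma exp_eq_tsum_real (z : ℝ) :
    Real.exp z = ∑' n : ℕ, z ^ n / (n ! : ℝ) := by
  rw [Real.exp_eq_exp_ℝ, NormedSpace.exp_eq_tsum_div]

/-- `M^M ≤ M! · e^M` as a real inequality. -/
private lemma pow_self_le_factorial_mul_exp (M : ℕ) :
    (M : ℝ) ^ M ≤ (M ! : ℝ) * Real.exp M := by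
  have h : (M : ℝ) ^ M / (M ! : ℝ) ≤ Real.exp M := by
    calc (M : ℝ) ^ M / (M ! : ℝ)
        ≤ ∑ n ∈ Finset.range (M + 1), (M : ℝ) ^ n / (n ! : ℝ) := by
          refine Finset.single_le_sum (f := fun n => (M : ℝ) ^ n / (n ! : ℝ)) ?_ ?_
          · intro i _
            positivity
          · simp
      _ ≤ Real.exp M := Real.sum_le_exp_of_nonneg (by positivity) _
  have hfac : (0 : ℝ) < (M ! : ℝ) := by exact_mod_cast M.factorial_pos
  calc (M : ℝ) ^ M = (M : ℝ) ^ M / (M ! : ℝ) * (M ! : ℝ) := by field_simp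
    _ ≤ Real.exp M * (M ! : ℝ) := by
        exact mul_le_mul_of_nonneg_right h hfac.le
    _ = (M ! : ℝ) * Real.exp M := mul_comm _ _

/-- Exponential Poisson tail bound: for `z ≥ 0` and `N ≥ 1` with
`N ≥ 8·e·max{2,z}`, we have `e^{−z} · Σ_{n=0}^{N} z^n/n! ≥ 1 − 4^{−N}`. -/
theorem poisson_tail_bound_exponential (z : ℝ) (hz : 0 ≤ z) (N : ℕ) (hN : 1 ≤ N)
    (hNz : 8 * Real.exp 1 * max 2 z ≤ (N : ℝ)) :
    1 - ((4 : ℝ) ^ N)⁻¹ ≤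
      Real.exp (-z) * ∑ n ∈ Finset.range (N + 1), z ^ n / (n.factorial : ℝ) := by
  set M := N + 1 with hM
  have he1 : (1 : ℝ) ≤ Real.exp 1 := by
    have := Real.add_one_le_exp (1 : ℝ); linarith
  have hzN : 8 * z ≤ (N : ℝ) := by
    have h1 : 8 * z ≤ 8 * Real.exp 1 * max 2 z := by
      have : z ≤ max 2 z := le_max_right _ _
      nlinarith [le_max_right (2:ℝ) z, hz]
    linarith
  have hezM : Real.exp 1 * z * 8 ≤ (M : ℝ) := by
    have h1 : 8 * Real.exp 1 * z ≤ 8 * Real.exp 1 * max 2 z := by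
      have : z ≤ max 2 z := le_max_right _ _
      nlinarith
    have : (N : ℝ) ≤ (M : ℝ) := by push_cast [hM]; linarith
    nlinarith
  have hMpos : (0 : ℝ) < (M : ℝ) := by positivity
  have hfacpos : (0 : ℝ) < (M ! : ℝ) := by exact_mod_cast M.factorial_pos
  -- term bound: z^M / M! ≤ (1/8)^M
  have hterm : z ^ M / (M ! : ℝ) ≤ (1 / 8 : ℝ) ^ M := by
    have hp : ((M : ℝ)) ^ M ≤ (M ! : ℝ) * Real.exp M := pow_self_le_factorial_mul_exp M
    have hexpM : Real.exp (M : ℝ) = (Real.exp 1) ^ M := by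
      rw [← Real.exp_nat_mul]; ring_nf
    have key : z ^ M * (M : ℝ) ^ M ≤ (M ! : ℝ) * ((Real.exp 1 * z) ^ M) := by
      calc z ^ M * (M : ℝ) ^ M ≤ z ^ M * ((M ! : ℝ) * Real.exp M) := by
            exact mul_le_mul_of_nonneg_left hp (by positivity)
        _ = (M ! : ℝ) * ((Real.exp 1 * z) ^ M) := by
            rw [hexpM, mul_pow]; ring
    have h8 : Real.exp 1 * z ≤ (M : ℝ) / 8 := by linarith
    have key2 : (Real.exp 1 * z) ^ M ≤ ((M : ℝ) / 8) ^ M := by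
      exact pow_le_pow_left₀ (by positivity) h8 M
    have hMM : (0 : ℝ) < (M : ℝ) ^ M := by positivity
    rw [div_le_iff₀ hfacpos]
    have : z ^ M * (M : ℝ) ^ M ≤ (1 / 8 : ℝ) ^ M * (M ! : ℝ) * (M : ℝ) ^ M := by
      calc z ^ M * (M : ℝ) ^ M ≤ (M ! : ℝ) * ((M : ℝ) / 8) ^ M := by
            calc z ^ M * (M : ℝ) ^ M ≤ (M ! : ℝ) * ((Real.exp 1 * z) ^ M) := key
              _ ≤ (M ! : ℝ) * ((M : ℝ) / 8) ^ M :=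
                  mul_le_mul_of_nonneg_left key2 hfacpos.le
        _ = (1 / 8 : ℝ) ^ M * (M ! : ℝ) * (M : ℝ) ^ M := by
            rw [div_pow, div_pow]; field_simp; rw [one_pow]
    exact le_of_mul_le_mul_right this hMM
  -- tail terms bound
  have htail_term : ∀ n : ℕ, z ^ (M + n) / ((M + n)! : ℝ) ≤ (1 / 8 : ℝ) ^ M * (1 / 2 : ℝ) ^ n := by
    intro n
    have hfac : ((M ! : ℝ)) * ((M : ℝ) + 1) ^ n ≤ ((M + n)! : ℝ) := by
      exact_mod_cast Nat.factorial_mul_pow_le_factorial (m := M) (n := n)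
    have hden : (0 : ℝ) < ((M + n)! : ℝ) := by exact_mod_cast (M + n).factorial_pos
    have hzhalf : z ≤ ((M : ℝ) + 1) / 2 := by
      have : (N : ℝ) ≤ (M : ℝ) := by push_cast [hM]; linarith
      linarith
    have step1 : z ^ (M + n) / ((M + n)! : ℝ) ≤ z ^ M / (M ! : ℝ) * (z / ((M : ℝ) + 1)) ^ n := by
      rw [pow_add, div_pow]
      rw [div_le_iff₀ hden]
      have h1 : z ^ M / (M ! : ℝ) * (z ^ n / ((M : ℝ) + 1) ^ n) * ((M + n)! : ℝ)
          ≥ z ^ M / (M ! : ℝ) * (z ^ n / ((M : ℝ) + 1) ^ n) * ((M ! : ℝ) * ((M : ℝ) + 1) ^ n) := by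
        exact mul_le_mul_of_nonneg_left hfac (by positivity)
      have h2 : z ^ M / (M ! : ℝ) * (z ^ n / ((M : ℝ) + 1) ^ n) * ((M ! : ℝ) * ((M : ℝ) + 1) ^ n)
          = z ^ M * z ^ n := by
        field_simp
      linarith
    have hhalf : (z / ((M : ℝ) + 1)) ^ n ≤ (1 / 2 : ℝ) ^ n := by
      apply pow_le_pow_left₀ (by positivity)
      rw [div_le_div_iff₀ (by positivity) (by norm_num)]
      linarith
    calc z ^ (M + n) / ((M + n)! : ℝ)
        ≤ z ^ M / (M ! : ℝ) * (z / ((M : ℝ) + 1)) ^ n := step1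
      _ ≤ (1 / 8 : ℝ) ^ M * (1 / 2 : ℝ) ^ n := by
          apply mul_le_mul hterm hhalf (by positivity) (by positivity)
  -- summability and splitting
  have hsum : Summable (fun n : ℕ => z ^ n / (n ! : ℝ)) := Real.summable_pow_div_factorial z
  have hsplit : (∑ n ∈ Finset.range M, z ^ n / (n ! : ℝ))
      + ∑' n : ℕ, z ^ (n + M) / ((n + M)! : ℝ) = Real.exp z := by
    rw [exp_eq_tsum_real]
    exact Summable.sum_add_tsum_nat_add M hsum
  have hgsum : Summable (fun n : ℕ => (1 / 8 : ℝ) ^ M * (1 / 2 : ℝ) ^ n) :=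
    (summable_geometric_of_lt_one (by norm_num) (by norm_num)).mul_left _
  have htail : ∑' n : ℕ, z ^ (n + M) / ((n + M)! : ℝ) ≤ 2 * (1 / 8 : ℝ) ^ M := by
    have h1 : ∑' n : ℕ, z ^ (n + M) / ((n + M)! : ℝ)
        ≤ ∑' n : ℕ, (1 / 8 : ℝ) ^ M * (1 / 2 : ℝ) ^ n := by
      apply Summable.tsum_le_tsum _ ((hsum.comp_injective (add_left_injective M))) hgsum
      intro n
      have := htail_term n
      rwa [Nat.add_comm M n] at this
    have h2 : ∑' n : ℕ, (1 / 8 : ℝ) ^ M * (1 / 2 : ℝ) ^ n = (1 / 8 : ℝ) ^ M * 2 := by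
      rw [tsum_mul_left, tsum_geometric_of_lt_one (by norm_num) (by norm_num)]
      norm_num
    linarith
  have htail_nonneg : 0 ≤ ∑' n : ℕ, z ^ (n + M) / ((n + M)! : ℝ) :=
    tsum_nonneg fun n => by positivity
  -- conclude
  have hexp : Real.exp (-z) * ∑ n ∈ Finset.range M, z ^ n / (n ! : ℝ)
      = 1 - Real.exp (-z) * ∑' n : ℕ, z ^ (n + M) / ((n + M)! : ℝ) := by
    have : (∑ n ∈ Finset.range M, z ^ n / (n ! : ℝ))
        = Real.exp z - ∑' n : ℕ, z ^ (n + M) / ((n + M)! : ℝ) := by linarith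
    rw [this, mul_sub, ← Real.exp_add]
    simp
  have hexpz : Real.exp (-z) ≤ 1 := Real.exp_le_one_iff.mpr (by linarith)
  have hfinal : Real.exp (-z) * ∑' n : ℕ, z ^ (n + M) / ((n + M)! : ℝ)
      ≤ 2 * (1 / 8 : ℝ) ^ M := by
    calc Real.exp (-z) * ∑' n : ℕ, z ^ (n + M) / ((n + M)! : ℝ)
        ≤ 1 * ∑' n : ℕ, z ^ (n + M) / ((n + M)! : ℝ) :=
          mul_le_mul_of_nonneg_right hexpz htail_nonneg
      _ = ∑' n : ℕ, z ^ (n + M) / ((n + M)! : ℝ) := one_mul _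
      _ ≤ 2 * (1 / 8 : ℝ) ^ M := htail
  have hnum : 2 * (1 / 8 : ℝ) ^ M ≤ ((4 : ℝ) ^ N)⁻¹ := by
    have h1 : (1 / 8 : ℝ) ^ N ≤ (1 / 4 : ℝ) ^ N := by
      apply pow_le_pow_left₀ (by norm_num) (by norm_num)
    have h2 : (1 / 8 : ℝ) ^ M = (1 / 8 : ℝ) ^ N * (1 / 8) := by
      rw [hM, pow_succ]
    have h3 : ((4 : ℝ) ^ N)⁻¹ = (1 / 4 : ℝ) ^ N := by
      rw [one_div, inv_pow]
    rw [h2, h3]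
    nlinarith [pow_nonneg (by norm_num : (0:ℝ) ≤ 1/8) N, pow_nonneg (by norm_num : (0:ℝ) ≤ 1/4) N]
  rw [hexp]
  linarith
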